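/- Let B be a standard Brownian motion on [0,1] defined on a probability space (Ω, F, P): B_0 = 0 almost surely, for all 0 ≤ s < t ≤ 1 the increment B_t − B_s is Gaussian with mean 0 and variance t − s, increments over pairwise disjoint intervals are independent, and almost surely the path t ↦ B_t is continuous. Then for every sequence of partitions P_n of [0,1] with mesh ‖P_n‖ → 0, writing P_n : 0 = a_0^{(n)} < … < a_{l_n}^{(n)} = 1, the quadratic variation sums ∑_{j=1}^{l_n} (B_{a_j^{(n)}} − B_{a_{j-1}^{(n)}})² converge to 1 in probability as n → ∞. -/

import Mathlib

set_option maxHeartbeats 1000000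
open MeasureTheory ProbabilityTheory Filter Finset Real Set Topology NNReal ENNReal

lemma integrable_pow_mul_gauss (n : ℕ) :
    Integrable (fun x : ℝ => x ^ n * rexp (-(2⁻¹) * x ^ 2)) := by
  have h := integrable_rpow_mul_exp_neg_mul_sq (b := 2⁻¹) (by norm_num)
    (s := (n : ℝ)) (by exact_mod_cast neg_one_lt_zero.trans_le (Nat.cast_nonneg n))
  simpa [Real.rpow_natCast] using h

lemma int_Ioi_sq_gauss :
    ∫ x in Ioi (0:ℝ), x ^ 2 * rexp (-(2⁻¹) * x ^ 2)
      = ∫ x in Ioi (0:ℝ), rexp (-(2⁻¹) * x ^ 2) := by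
  have hderiv : ∀ x ∈ Ici (0:ℝ), HasDerivAt (fun x : ℝ => -(x * rexp (-(2⁻¹) * x ^ 2)))
      (x ^ 2 * rexp (-(2⁻¹) * x ^ 2) - rexp (-(2⁻¹) * x ^ 2)) x := by
    intro x _
    have h1 : HasDerivAt (fun x : ℝ => -(2⁻¹) * x ^ 2) (-(2⁻¹) * (2 * x)) x := by
      simpa using ((hasDerivAt_pow 2 x).const_mul (-(2⁻¹:ℝ)))
    have h2 := ((h1.exp).const_mul x).add_const 0
    have h3 : HasDerivAt (fun x : ℝ => x * rexp (-(2⁻¹) * x ^ 2))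
        (1 * rexp (-(2⁻¹) * x ^ 2) + x * (rexp (-(2⁻¹) * x ^ 2) * (-(2⁻¹) * (2 * x)))) x :=
      (hasDerivAt_id x).mul h1.exp
    have := h3.neg
    refine this.congr_deriv ?_
    ring
  have hint : IntegrableOn (fun x : ℝ =>
      x ^ 2 * rexp (-(2⁻¹) * x ^ 2) - rexp (-(2⁻¹) * x ^ 2)) (Ioi 0) := by
    have h0' : Integrable (fun x : ℝ => rexp (-(2⁻¹) * x ^ 2)) := by
      simpa using integrable_pow_mul_gauss 0
    exact ((integrable_pow_mul_gauss 2).sub h0').integrableOn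
  have htend : Tendsto (fun x : ℝ => -(x * rexp (-(2⁻¹) * x ^ 2))) atTop (𝓝 0) := by
    have h1 : (fun x : ℝ => x ^ (1:ℝ) * rexp (-(2⁻¹) * x ^ 2)) =o[atTop]
        (fun x : ℝ => rexp (-(1/2) * x)) :=
      rpow_mul_exp_neg_mul_sq_isLittleO_exp_neg (by norm_num) 1
    have h2 : Tendsto (fun x : ℝ => rexp (-(1/2) * x)) atTop (𝓝 0) := by
      apply Real.tendsto_exp_atBot.comp
      exact (tendsto_const_mul_atBot_of_neg (by norm_num)).mpr tendsto_id
    have h3 := h1.isBigO.trans_tendsto h2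
    have h4 : Tendsto (fun x : ℝ => x * rexp (-(2⁻¹) * x ^ 2)) atTop (𝓝 0) := by
      apply h3.congr'
      filter_upwards [eventually_gt_atTop (0:ℝ)] with x hx
      rw [Real.rpow_one]
    simpa using h4.neg
  have key := integral_Ioi_of_hasDerivAt_of_tendsto' hderiv hint htend
  simp only [mul_zero, zero_mul, neg_zero, sub_zero] at key
  have := (integrable_pow_mul_gauss 2).integrableOn (s := Ioi 0)
  have h0 := ((by simpa using integrable_pow_mul_gauss 0) :
    Integrable (fun x : ℝ => rexp (-(2⁻¹) * x ^ 2))).integrableOn (s := Ioi 0)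
  rw [integral_sub this h0] at key
  linarith [key]

lemma int_line_sq_gauss :
    ∫ x : ℝ, x ^ 2 * rexp (-(2⁻¹) * x ^ 2) = Real.sqrt (2 * π) := by
  have hInt : Integrable (fun x : ℝ => x ^ 2 * rexp (-(2⁻¹) * x ^ 2)) :=
    integrable_pow_mul_gauss 2
  have hsplit := intervalIntegral.integral_Iic_add_Ioi (μ := volume) (b := (0:ℝ))
    hInt.integrableOn hInt.integrableOn
  have heven : ∫ x in Iic (0:ℝ), x ^ 2 * rexp (-(2⁻¹) * x ^ 2)
      = ∫ x in Ioi (0:ℝ), x ^ 2 * rexp (-(2⁻¹) * x ^ 2) := by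
    rw [← neg_zero, ← integral_comp_neg_Iic]
    simp [neg_sq]
  have hgauss := integral_gaussian_Ioi (2⁻¹ : ℝ)
  have : Real.sqrt (π / 2⁻¹) = Real.sqrt (2 * π) := by norm_num [mul_comm]
  rw [← hsplit, heven, int_Ioi_sq_gauss, hgauss, this]
  ring

lemma gauss_pdf_one : gaussianPDFReal 0 1
    = fun x => (Real.sqrt (2 * π))⁻¹ * rexp (-(2⁻¹) * x ^ 2) := by
  ext x
  simp only [gaussianPDFReal, NNReal.coe_one, mul_one, sub_zero]
  congr 1
  ring

lemma integral_gauss_one (g : ℝ → ℝ) :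
    ∫ x : ℝ, g x ∂(gaussianReal 0 1)
      = ∫ x : ℝ, (Real.sqrt (2 * π))⁻¹ * (rexp (-(2⁻¹) * x ^ 2) * g x) := by
  rw [gaussianReal_of_var_ne_zero 0 one_ne_zero]
  have hd : gaussianPDF 0 1 = fun x => (((gaussianPDFReal 0 1 x).toNNReal : ℝ≥0) : ℝ≥0∞) := rfl
  rw [hd, integral_withDensity_eq_integral_smul ((measurable_gaussianPDFReal 0 1).real_toNNReal) g]
  congr 1
  ext x
  simp only [NNReal.smul_def, gauss_pdf_one, smul_eq_mul]
  rw [Real.coe_toNNReal _ (by positivity)]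
  ring

lemma integrable_pow_gauss_one (n : ℕ) :
    Integrable (fun x : ℝ => x ^ n) (gaussianReal 0 1) := by
  rw [gaussianReal_of_var_ne_zero 0 one_ne_zero]
  have hd : gaussianPDF 0 1 = fun x => (((gaussianPDFReal 0 1 x).toNNReal : ℝ≥0) : ℝ≥0∞) := rfl
  rw [hd, integrable_withDensity_iff_integrable_smul
    ((measurable_gaussianPDFReal 0 1).real_toNNReal)]
  have : (fun x : ℝ => ((gaussianPDFReal 0 1 x).toNNReal : ℝ≥0) • (x ^ n))
      = fun x => (Real.sqrt (2 * π))⁻¹ * (x ^ n * rexp (-(2⁻¹) * x ^ 2)) := by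
    ext x
    simp only [NNReal.smul_def, gauss_pdf_one, smul_eq_mul]
    rw [Real.coe_toNNReal _ (by positivity)]
    ring
  rw [this]
  exact (integrable_pow_mul_gauss n).const_mul _

lemma M2_eq : ∫ x : ℝ, x ^ 2 ∂(gaussianReal 0 1) = 1 := by
  rw [integral_gauss_one]
  have : (fun x : ℝ => (Real.sqrt (2 * π))⁻¹ * (rexp (-(2⁻¹) * x ^ 2) * x ^ 2))
      = fun x => (Real.sqrt (2 * π))⁻¹ * (x ^ 2 * rexp (-(2⁻¹) * x ^ 2)) := by
    ext x; ring
  rw [this, MeasureTheory.integral_const_mul, int_line_sq_gauss]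
  rw [inv_mul_cancel₀]
  positivity

noncomputable def M4 : ℝ := ∫ x : ℝ, x ^ 4 ∂(gaussianReal 0 1)

lemma M4_nonneg : 0 ≤ M4 := integral_nonneg (fun x => by positivity)

lemma map_sqrt_gauss (v : ℝ≥0) :
    Measure.map (fun x : ℝ => Real.sqrt v * x) (gaussianReal 0 1) = gaussianReal 0 v := by
  have h := gaussianReal_map_const_mul (μ := 0) (v := 1) (Real.sqrt v)
  have h2 : (fun x : ℝ => Real.sqrt v * x) = (Real.sqrt v * ·) := rfl
  rw [h2, h, mul_zero]
  congr 1
  ext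
  simp [Real.sq_sqrt v.coe_nonneg]

lemma int_sq_gauss (v : ℝ≥0) : ∫ x : ℝ, x ^ 2 ∂(gaussianReal 0 v) = v := by
  rw [← map_sqrt_gauss v, integral_map (by fun_prop) (by fun_prop)]
  have : (fun x : ℝ => (Real.sqrt v * x) ^ 2) = fun x : ℝ => (v : ℝ) * x ^ 2 := by
    ext x
    rw [mul_pow, Real.sq_sqrt v.coe_nonneg]
  rw [this, MeasureTheory.integral_const_mul, M2_eq, mul_one]

lemma int_pow4_gauss (v : ℝ≥0) :
    ∫ x : ℝ, x ^ 4 ∂(gaussianReal 0 v) = (v : ℝ) ^ 2 * M4 := by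
  rw [← map_sqrt_gauss v, integral_map (by fun_prop) (by fun_prop)]
  have : (fun x : ℝ => (Real.sqrt v * x) ^ 4) = fun x : ℝ => (v : ℝ) ^ 2 * x ^ 4 := by
    ext x
    rw [mul_pow, show Real.sqrt v ^ 4 = (Real.sqrt v ^ 2) ^ 2 by ring, Real.sq_sqrt v.coe_nonneg]
  rw [this, MeasureTheory.integral_const_mul, M4]

lemma integrable_pow4_gauss (v : ℝ≥0) :
    Integrable (fun x : ℝ => x ^ 4) (gaussianReal 0 v) := by
  rw [← map_sqrt_gauss v, integrable_map_measure (by fun_prop) (by fun_prop)]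
  have : ((fun x : ℝ => x ^ 4) ∘ (fun x : ℝ => Real.sqrt v * x))
      = fun x : ℝ => (v : ℝ) ^ 2 * x ^ 4 := by
    ext x
    simp only [Function.comp_apply]
    rw [mul_pow, show Real.sqrt v ^ 4 = (Real.sqrt v ^ 2) ^ 2 by ring, Real.sq_sqrt v.coe_nonneg]
  rw [this]
  exact (integrable_pow_gauss_one 4).const_mul _

section OmegaSide

variable {Ω : Type*} [MeasurableSpace Ω] {P : Measure Ω} [IsProbabilityMeasure P]
  {X : Ω → ℝ} {v : ℝ≥0}

lemma aemeas_of_map (h : Measure.map X P = gaussianReal 0 v) : AEMeasurable X P := by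
  by_contra hc
  rw [Measure.map_of_not_aemeasurable hc] at h
  exact (IsProbabilityMeasure.ne_zero (μ := gaussianReal 0 v)) h.symm

lemma int_sq_of_map (h : Measure.map X P = gaussianReal 0 v) :
    ∫ ω, (X ω) ^ 2 ∂P = v := by
  have hm := aemeas_of_map h
  rw [← integral_map hm (f := fun x => x ^ 2) (by fun_prop), h, int_sq_gauss]

lemma int_pow4_of_map (h : Measure.map X P = gaussianReal 0 v) :
    ∫ ω, (X ω) ^ 4 ∂P = (v : ℝ) ^ 2 * M4 := by
  have hm := aemeas_of_map h
  rw [← integral_map hm (f := fun x => x ^ 4) (by fun_prop), h, int_pow4_gauss]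

lemma integrable_pow4_of_map (h : Measure.map X P = gaussianReal 0 v) :
    Integrable (fun ω => (X ω) ^ 4) P := by
  have hm := aemeas_of_map h
  have h4 := integrable_pow4_gauss v
  rw [← h] at h4
  exact (integrable_map_measure (by fun_prop) hm).mp h4

lemma memLp_sq_of_map (h : Measure.map X P = gaussianReal 0 v) :
    MemLp (fun ω => (X ω) ^ 2) 2 P := by
  have hm := aemeas_of_map h
  rw [memLp_two_iff_integrable_sq ((hm.pow_const 2).aestronglyMeasurable)]
  have h4 := integrable_pow4_of_map h
  have heq : (fun ω => ((X ω) ^ 2) ^ 2) = fun ω => (X ω) ^ 4 := by ext ω; ring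
  rw [heq]
  exact h4

lemma variance_sq_of_map (h : Measure.map X P = gaussianReal 0 v) :
    variance (fun ω => (X ω) ^ 2) P ≤ (v : ℝ) ^ 2 * M4 := by
  rw [variance_eq_sub (memLp_sq_of_map h)]
  have h1 : (fun ω => (X ω) ^ 2) ^ 2 = fun ω => (X ω) ^ 4 := by ext ω; simp [Pi.pow_apply]; ring
  rw [h1, int_pow4_of_map h, int_sq_of_map h]
  nlinarith [sq_nonneg (v : ℝ)]

end OmegaSide



open MeasureTheory ProbabilityTheory Filter Finset

/-- A partition of `[a,b]`: a finite increasing sequence `a = p 0 < p 1 < … < p l = b`. -/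
def IsPartition (a b : ℝ) (l : ℕ) (p : ℕ → ℝ) : Prop :=
  p 0 = a ∧ p l = b ∧ ∀ j, j < l → p j < p (j + 1)


lemma partition_mono {L : ℕ} {q : ℕ → ℝ} (h : ∀ j, j < L → q j < q (j + 1)) :
    ∀ i j, i ≤ j → j ≤ L → q i ≤ q j := by
  intro i j hij hjL
  induction j with
  | zero => obtain rfl := Nat.le_zero.mp hij; exact le_rfl
  | succ k ih =>
    rcases eq_or_lt_of_le hij with rfl | hlt
    · exact le_rfl
    · exact le_trans (ih (Nat.lt_succ_iff.mp hlt) (le_trans (Nat.le_succ k) hjL))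
        (le_of_lt (h k (Nat.lt_of_succ_le hjL)))

lemma key_estimate {Ω : Type*} [MeasurableSpace Ω] (P : Measure Ω) [IsProbabilityMeasure P]
    (B : ℝ → Ω → ℝ)
    (hgauss : ∀ s t : ℝ, 0 ≤ s → s < t → t ≤ 1 →
      Measure.map (fun ω => B t ω - B s ω) P = gaussianReal 0 (Real.toNNReal (t - s)))
    (hindep : ∀ (N : ℕ) (t : Fin (N + 1) → ℝ), StrictMono t →
      (∀ i, 0 ≤ t i ∧ t i ≤ 1) →
      iIndepFun
        (fun (i : Fin N) ω => B (t i.succ) ω - B (t i.castSucc) ω) P)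
    (L : ℕ) (q : ℕ → ℝ) (hq : IsPartition 0 1 L q)
    {δ : ℝ} (hmesh : ∀ j, j < L → q (j + 1) - q j ≤ δ)
    {ε : ℝ} (hε : 0 < ε) :
    P {ω | ε ≤ dist (∑ j ∈ range L, (B (q (j + 1)) ω - B (q j) ω) ^ 2) 1}
      ≤ ENNReal.ofReal (M4 * δ / ε ^ 2) := by
  obtain ⟨hq0, hqL, hqlt⟩ := hq
  have hmono := partition_mono hqlt
  set Y : ℕ → Ω → ℝ := fun j ω => (B (q (j + 1)) ω - B (q j) ω) ^ 2 with hY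
  set S : Ω → ℝ := fun ω => ∑ j ∈ range L, Y j ω with hS
  have hmap : ∀ j, j < L →
      Measure.map (fun ω => B (q (j + 1)) ω - B (q j) ω) P
        = gaussianReal 0 (Real.toNNReal (q (j + 1) - q j)) := by
    intro j hj
    refine hgauss (q j) (q (j + 1)) ?_ (hqlt j hj) ?_
    · rw [← hq0]; exact hmono 0 j (Nat.zero_le j) hj.le
    · rw [← hqL]; exact hmono (j + 1) L (Nat.succ_le_of_lt hj) le_rfl
  have hΔnn : ∀ j, j < L → 0 ≤ q (j + 1) - q j := fun j hj => sub_nonneg.mpr (hqlt j hj).le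
  have hMem : ∀ j, j < L → MemLp (Y j) 2 P := fun j hj => memLp_sq_of_map (hmap j hj)
  have hSum_eq : (∑ j ∈ range L, Y j) = S := by ext ω; simp [hS, Finset.sum_apply]
  have hMemS : MemLp S 2 P := by
    rw [← hSum_eq]
    exact memLp_finset_sum' _ (fun j hj => hMem j (mem_range.mp hj))
  have hES : ∫ ω, S ω ∂P = 1 := by
    rw [hS]
    rw [integral_finset_sum _ (fun j hj => (hMem j (mem_range.mp hj)).integrable one_le_two)]
    have hterm : ∀ j ∈ range L, ∫ ω, Y j ω ∂P = q (j + 1) - q j := by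
      intro j hj
      rw [hY]
      rw [int_sq_of_map (hmap j (mem_range.mp hj)),
        Real.coe_toNNReal _ (hΔnn j (mem_range.mp hj))]
    rw [Finset.sum_congr rfl hterm, Finset.sum_range_sub q, hqL, hq0, sub_zero]
  -- independence
  have hiid := hindep L (fun i : Fin (L + 1) => q i)
    (Fin.strictMono_iff_lt_succ.mpr (fun i => hqlt i i.isLt))
    (fun i => ⟨by rw [← hq0]; exact hmono 0 i (Nat.zero_le _) (Nat.lt_succ_iff.mp i.isLt),
      by rw [← hqL]; exact hmono i L (Nat.lt_succ_iff.mp i.isLt) le_rfl⟩)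
  have hYiid := hiid.comp (fun _ (x : ℝ) => x ^ 2) (fun _ => measurable_id.pow_const 2)
  have hpair : Set.Pairwise ↑(range L) (fun i j => IndepFun (Y i) (Y j) P) := by
    intro i hi j hj hij
    have hi' := mem_range.mp hi
    have hj' := mem_range.mp hj
    exact hYiid.indepFun (i := ⟨i, hi'⟩) (j := ⟨j, hj'⟩) (by simp [Fin.ext_iff, hij])
  have hvar : variance S P ≤ M4 * δ := by
    rw [← hSum_eq, IndepFun.variance_sum (fun j hj => hMem j (mem_range.mp hj)) hpair]
    calc ∑ j ∈ range L, variance (Y j) P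
        ≤ ∑ j ∈ range L, (M4 * δ) * (q (j + 1) - q j) := by
          refine Finset.sum_le_sum (fun j hj => ?_)
          have hj' := mem_range.mp hj
          have h1 := variance_sq_of_map (hmap j hj')
          rw [Real.coe_toNNReal _ (hΔnn j hj')] at h1
          have h2 := hmesh j hj'
          have h3 := hΔnn j hj'
          nlinarith [h1, mul_le_mul_of_nonneg_right h2 (mul_nonneg M4_nonneg h3)]
      _ = (M4 * δ) * (q L - q 0) := by rw [← Finset.mul_sum, Finset.sum_range_sub q]
      _ = M4 * δ := by rw [hqL, hq0]; ring
  have hcheb := meas_ge_le_variance_div_sq (μ := P) hMemS hε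
  rw [hES] at hcheb
  have hset : {ω | ε ≤ dist (∑ j ∈ range L, (B (q (j + 1)) ω - B (q j) ω) ^ 2) 1}
      = {ω | ε ≤ |S ω - 1|} := by
    ext ω
    simp [Real.dist_eq, hS, hY]
  rw [hset]
  refine le_trans hcheb (ENNReal.ofReal_le_ofReal ?_)
  have hε2 : (0:ℝ) < ε ^ 2 := by positivity
  exact div_le_div_of_nonneg_right hvar hε2.le

/-- Let `B` be a standard Brownian motion on `[0,1]`. For every sequence
of partitions of `[0,1]` whose mesh tends to `0`, the quadratic variation sums
`∑_j (B_{a_j} - B_{a_{j-1}})²` converge to `1` in probability. -/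
theorem brownian_quadratic_variation_tendsto_one_in_probability
    {Ω : Type*} [MeasurableSpace Ω] (P : Measure Ω) [IsProbabilityMeasure P]
    (B : ℝ → Ω → ℝ)
    (h0 : ∀ᵐ ω ∂P, B 0 ω = 0)
    (hgauss : ∀ s t : ℝ, 0 ≤ s → s < t → t ≤ 1 →
      Measure.map (fun ω => B t ω - B s ω) P = gaussianReal 0 (Real.toNNReal (t - s)))
    (hindep : ∀ (N : ℕ) (t : Fin (N + 1) → ℝ), StrictMono t →
      (∀ i, 0 ≤ t i ∧ t i ≤ 1) →
      iIndepFun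
        (fun (i : Fin N) ω => B (t i.succ) ω - B (t i.castSucc) ω) P)
    (hcont : ∀ᵐ ω ∂P, ContinuousOn (fun t => B t ω) (Set.Icc (0 : ℝ) 1)) :
    ∀ (l : ℕ → ℕ) (p : ℕ → ℕ → ℝ),
      (∀ n, IsPartition 0 1 (l n) (p n)) →
      (∀ δ > (0 : ℝ), ∃ N : ℕ, ∀ n ≥ N, ∀ j, j < l n → p n (j + 1) - p n j < δ) →
      TendstoInMeasure P
        (fun n ω => ∑ j ∈ Finset.range (l n), (B (p n (j + 1)) ω - B (p n j) ω)^2)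
        atTop (fun _ => 1) := by
  intro l p hpart hmesh
  rw [tendstoInMeasure_iff_dist]
  intro ε hε
  rw [ENNReal.tendsto_atTop_zero]
  intro η hη
  set η' : ℝ≥0∞ := min η 1 with hη'
  have hη'pos : 0 < η' := lt_min hη zero_lt_one
  have hη'top : η' ≠ ⊤ := ne_top_of_le_ne_top ENNReal.one_ne_top (min_le_right _ _)
  have hη'real : 0 < η'.toReal := ENNReal.toReal_pos hη'pos.ne' hη'top
  have hM1 : (0:ℝ) < M4 + 1 := by linarith [M4_nonneg]
  set δ : ℝ := ε ^ 2 * η'.toReal / (M4 + 1) with hδ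
  have hδpos : 0 < δ := by positivity
  obtain ⟨N, hN⟩ := hmesh δ hδpos
  refine ⟨N, fun n hn => ?_⟩
  have hkey := key_estimate P B hgauss hindep (l n) (p n) (hpart n)
    (fun j hj => (hN n hn j hj).le) hε
  refine le_trans hkey ?_
  have h1 : M4 * δ / ε ^ 2 ≤ η'.toReal := by
    rw [hδ]
    rw [show M4 * (ε ^ 2 * η'.toReal / (M4 + 1)) / ε ^ 2 = (M4 / (M4 + 1)) * η'.toReal by
      field_simp]
    have : M4 / (M4 + 1) ≤ 1 := by
      rw [div_le_one hM1]; linarith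
    nlinarith [hη'real.le]
  calc ENNReal.ofReal (M4 * δ / ε ^ 2) ≤ ENNReal.ofReal η'.toReal :=
        ENNReal.ofReal_le_ofReal h1
    _ = η' := ENNReal.ofReal_toReal hη'top
    _ ≤ η := min_le_left _ _
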